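/- arXiv:1501.00945 — 6 statements merged into one kernel-verified Lean document; each statement's English description precedes it below -/
import Mathlib

section
/- Under axioms (A1)–(A4), for any 0 < ε' < ε < C there exists a finite set F ⊆ G such that P_ε ⊆ P_{ε'} + F. -/
open Pointwise

theorem stmt2 {G : Type*} [AddCommGroup G] [TopologicalSpace G] [IsTopologicalAddGroup G]
    [LocallyCompactSpace G] (C : ℝ) (hC : 0 < C) (P : ℝ → Set G)
    (hA1 : ∀ ε : ℝ, 0 < ε → ε < C → (0 : G) ∈ P ε ∧ P ε = -P ε)
    (hA2 : ∀ ε : ℝ, 0 < ε → ε < C → ∀ K : Set G, IsCompact K → (P ε ∩ K).Finite)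
    (hA3 : ∀ ε ε' : ℝ, 0 < ε → 0 < ε' → ε + ε' < C → P ε + P ε' ⊆ P (ε + ε'))
    (hA4 : ∀ ε : ℝ, 0 < ε → ε < C → ∃ K : Set G, IsCompact K ∧ P ε + K = Set.univ) :
    ∀ ε' ε : ℝ, 0 < ε' → ε' < ε → ε < C →
      ∃ F : Set G, F.Finite ∧ P ε ⊆ P ε' + F := by
  intro ε' ε hε' hlt hεC
  have hεpos : 0 < ε := lt_trans hε' hlt
  set σ := min ε' ((C - ε) / 2) with hσdef
  have hσpos : 0 < σ := lt_min hε' (by linarith)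
  have hσε' : σ ≤ ε' := min_le_left _ _
  have hσC : σ < C := lt_of_le_of_lt hσε' (lt_trans hlt hεC)
  have hεσC : ε + σ < C := by
    have : σ ≤ (C - ε) / 2 := min_le_right _ _
    linarith
  obtain ⟨K, hKcomp, hKP⟩ := hA4 σ hσpos hσC
  refine ⟨P (ε + σ) ∩ K, hA2 (ε + σ) (by linarith) hεσC K hKcomp, ?_⟩
  -- P σ ⊆ P ε'
  have hsub : P σ ⊆ P ε' := by
    rcases eq_or_lt_of_le hσε' with h | h
    · rw [h]
    · intro p hp
      have h0 : (0 : G) ∈ P (ε' - σ) := (hA1 (ε' - σ) (by linarith) (by linarith)).1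
      have := hA3 σ (ε' - σ) hσpos (by linarith) (by linarith)
        (Set.add_mem_add hp h0)
      simpa using this
  intro x hx
  have hxuniv : x ∈ P σ + K := by rw [hKP]; trivial
  obtain ⟨p, hp, k, hk, hpk⟩ := hxuniv
  have hnp : -p ∈ P σ := by
    have hsym := (hA1 σ hσpos hσC).2
    rw [hsym] at hp
    simpa using hp
  have hxp : x - p ∈ P (ε + σ) := by
    have := hA3 ε σ hεpos hσpos hεσC (Set.add_mem_add hx hnp)
    simpa [sub_eq_add_neg] using this
  have hxpk : x - p = k := by simp only [← hpk]; abel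
  have hxpmem : x - p ∈ P (ε + σ) ∩ K := ⟨hxp, hxpk ▸ hk⟩
  have : p + (x - p) = x := by abel
  exact this ▸ Set.add_mem_add (hsub hp) hxpmem
end

section
/- If ω is a translation bounded weighted Dirac comb whose support Γ is weakly uniformly discrete (i.e. sup_{x∈G} #(Γ ∩ (x+K)) ≤ N for some N), then for every t ∈ G one has ‖T_t ω − ω‖_K ≤ 2N · ‖T_t ω − ω‖_∞; consequently ω is norm-almost periodic if and only if it is sup-almost periodic. -/
open Pointwise
open scoped ENNReal NNReal

theorem stmt6 {G : Type*} [AddCommGroup G] [TopologicalSpace G] [IsTopologicalAddGroup G]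
    [LocallyCompactSpace G]
    (K : Set G) (hK : IsCompact K) (hKint : (interior K).Nonempty)
    (w : G → ℂ) (N : ℕ)
    (hwud : ∀ x : G, ∃ F : Finset G,
      {g : G | w g ≠ 0} ∩ ((fun k => x + k) '' K) ⊆ ↑F ∧ F.card ≤ N)
    (htb : (⨆ x : G, ∑' y : ((fun k => x + k) '' K : Set G), (‖w (y : G)‖₊ : ℝ≥0∞)) < ⊤)
    (normK normI : G → ℝ≥0∞)
    (hnormK : ∀ t : G, normK t =
      ⨆ x : G, ∑' y : ((fun k => x + k) '' K : Set G), (‖w ((y : G) - t) - w (y : G)‖₊ : ℝ≥0∞))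
    (hnormI : ∀ t : G, normI t = ⨆ x : G, (‖w (x - t) - w x‖₊ : ℝ≥0∞)) :
    (∀ t : G, normK t ≤ 2 * N * normI t) ∧
    ((∀ ε : ℝ≥0∞, 0 < ε → ∃ Q : Set G, IsCompact Q ∧ {t : G | normK t < ε} + Q = Set.univ) ↔
     (∀ ε : ℝ≥0∞, 0 < ε → ∃ Q : Set G, IsCompact Q ∧ {t : G | normI t < ε} + Q = Set.univ)) := by
  classical
  have key : ∀ t : G, normK t ≤ 2 * N * normI t := by
    intro t
    rw [hnormK]
    refine iSup_le fun x => ?_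
    obtain ⟨F1, hF1sub, hF1card⟩ := hwud x
    obtain ⟨F2, hF2sub, hF2card⟩ := hwud (x - t)
    set f : G → ℝ≥0∞ := fun y => (‖w (y - t) - w y‖₊ : ℝ≥0∞) with hf
    set F : Finset G := F1 ∪ F2.image (· + t) with hF
    have hsum : ∑' y : ((fun k => x + k) '' K : Set G), f y ≤ ∑ y ∈ F, f y := by
      rw [tsum_subtype, ← Finset.tsum_subtype', tsum_subtype]
      refine ENNReal.tsum_le_tsum fun y => ?_
      by_cases hy : y ∈ ((fun k => x + k) '' K : Set G)
      · rw [Set.indicator_of_mem hy]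
        by_cases hfy : f y = 0
        · rw [hfy]; exact zero_le
        · have hne : w (y - t) - w y ≠ 0 := by
            intro h0
            apply hfy
            simp [hf, h0]
          have hyF : y ∈ (F : Set G) := by
            obtain ⟨k, hk, rfl⟩ := hy
            by_cases hw : w (x + k) ≠ 0
            · exact Finset.mem_coe.mpr (Finset.mem_union_left _
                (hF1sub ⟨hw, ⟨k, hk, rfl⟩⟩))
            · push_neg at hw
              have hw' : w (x + k - t) ≠ 0 := by
                intro h0; apply hne; rw [h0, hw, sub_zero]
              have hmem : x + k - t ∈ {g : G | w g ≠ 0} ∩ ((fun k => x - t + k) '' K) :=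
                ⟨hw', ⟨k, hk, (add_sub_right_comm x k t).symm⟩⟩
              refine Finset.mem_coe.mpr (Finset.mem_union_right _ ?_)
              refine Finset.mem_image.mpr ⟨x + k - t, hF2sub hmem, ?_⟩
              simp
          rw [Set.indicator_of_mem hyF]
      · rw [Set.indicator_of_notMem hy]; exact zero_le
    refine hsum.trans ?_
    have hsum2 : ∑ y ∈ F, f y ≤ ∑ _y ∈ F, normI t := by
      refine Finset.sum_le_sum fun y _ => ?_
      rw [hnormI]
      exact le_iSup (fun z => ((‖w (z - t) - w z‖₊ : ℝ≥0∞))) y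
    refine hsum2.trans ?_
    rw [Finset.sum_const, nsmul_eq_mul]
    have hcard : (F.card : ℝ≥0∞) ≤ 2 * N := by
      have : F.card ≤ 2 * N := by
        calc F.card ≤ F1.card + (F2.image (· + t)).card := Finset.card_union_le _ _
        _ ≤ N + N := add_le_add hF1card ((Finset.card_image_le).trans hF2card)
        _ = 2 * N := (two_mul N).symm
      exact_mod_cast this
    exact mul_le_mul_left hcard _
  have hIK : ∀ t : G, normI t ≤ normK t := by
    intro t
    obtain ⟨k0, hk0⟩ := hKint
    have hk0K : k0 ∈ K := interior_subset hk0
    rw [hnormI, hnormK]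
    refine iSup_le fun x => ?_
    have hxmem : x ∈ ((fun k => x - k0 + k) '' K : Set G) :=
      ⟨k0, hk0K, by simp⟩
    have h1 : (‖w (x - t) - w x‖₊ : ℝ≥0∞) ≤
        ∑' y : ((fun k => x - k0 + k) '' K : Set G),
          (‖w ((y : G) - t) - w (y : G)‖₊ : ℝ≥0∞) :=
      ENNReal.le_tsum (⟨x, hxmem⟩ : ((fun k => x - k0 + k) '' K : Set G))
    exact h1.trans (le_iSup (fun z => ∑' y : ((fun k => z + k) '' K : Set G),
      (‖w ((y : G) - t) - w (y : G)‖₊ : ℝ≥0∞)) (x - k0))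
  refine ⟨key, ?_, ?_⟩
  · intro h ε hε
    obtain ⟨Q, hQ, hQeq⟩ := h ε hε
    refine ⟨Q, hQ, ?_⟩
    have hsub : {t : G | normK t < ε} ⊆ {t : G | normI t < ε} :=
      fun t ht => lt_of_le_of_lt (hIK t) ht
    exact Set.eq_univ_of_univ_subset (hQeq ▸ Set.add_subset_add_right hsub)
  · intro h ε hε
    by_cases hN : N = 0
    · refine ⟨{0}, isCompact_singleton, ?_⟩
      have : {t : G | normK t < ε} = Set.univ := by
        refine Set.eq_univ_of_forall fun t => ?_
        have := key t
        rw [hN] at this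
        simp only [Nat.cast_zero, mul_zero, zero_mul, nonpos_iff_eq_zero] at this
        simpa [Set.mem_setOf_eq, this] using hε
      rw [this]
      exact Set.eq_univ_of_forall fun g => ⟨g, trivial, 0, rfl, add_zero g⟩
    · have h2N : (2 * N : ℝ≥0∞) ≠ 0 := by
        simp [hN]
      have h2N' : (2 * N : ℝ≥0∞) ≠ ⊤ := by
        simp [ENNReal.mul_eq_top]
      obtain ⟨Q, hQ, hQeq⟩ := h (ε / (2 * N)) (ENNReal.div_pos hε.ne' h2N')
      refine ⟨Q, hQ, ?_⟩
      have hsub : {t : G | normI t < ε / (2 * N)} ⊆ {t : G | normK t < ε} := by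
        intro t ht
        have h1 : normI t * (2 * N) < ε :=
          (ENNReal.lt_div_iff_mul_lt (Or.inl h2N) (Or.inl h2N')).mp ht
        calc normK t ≤ 2 * N * normI t := key t
          _ = normI t * (2 * N) := by ring
          _ < ε := h1
      exact Set.eq_univ_of_univ_subset (hQeq ▸ Set.add_subset_add_right hsub)
end

section
/- Let Γ ⊆ G be weakly uniformly discrete, 0 < ε < 1, and t ∈ G. Then ‖T_t δ_Γ − δ_Γ‖_∞ ≤ ε if and only if t + Γ = Γ. -/
open Pointwise

theorem stmt7 {G : Type*} [AddCommGroup G] [TopologicalSpace G] [IsTopologicalAddGroup G]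
    (Γ : Set G) (K : Set G) (hK : IsCompact K) (hKint : (interior K).Nonempty)
    (N : ℕ)
    (hwud : ∀ x : G, ∃ F : Finset G, Γ ∩ ((fun k => x + k) '' K) ⊆ ↑F ∧ F.card ≤ N)
    (ε : ℝ) (hε0 : 0 < ε) (hε1 : ε < 1) (t : G) :
    (∀ x : G, |Set.indicator Γ (fun _ => (1 : ℝ)) (x - t)
        - Set.indicator Γ (fun _ => (1 : ℝ)) x| ≤ ε) ↔
      (fun g => t + g) '' Γ = Γ := by
  constructor
  · intro h
    have key : ∀ x : G, (x - t ∈ Γ ↔ x ∈ Γ) := by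
      intro x
      have hx := h x
      by_cases h1 : x - t ∈ Γ <;> by_cases h2 : x ∈ Γ <;>
        simp [Set.indicator_of_mem, Set.indicator_of_notMem, h1, h2] at hx ⊢ <;>
        linarith
    ext y
    constructor
    · rintro ⟨g, hg, rfl⟩
      have := (key (t + g)).mp (by simpa using hg)
      exact this
    · intro hy
      exact ⟨y - t, (key y).mpr hy, by simp⟩
  · intro h x
    have key : x - t ∈ Γ ↔ x ∈ Γ := by
      constructor
      · intro hx
        have : t + (x - t) ∈ (fun g => t + g) '' Γ := ⟨x - t, hx, rfl⟩
        rw [h] at this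
        simpa using this
      · intro hx
        rw [← h] at hx
        obtain ⟨g, hg, hgx⟩ := hx
        have : x - t = g := by rw [← hgx]; simp
        rwa [this]
    by_cases h1 : x ∈ Γ
    · rw [Set.indicator_of_mem (key.mpr h1), Set.indicator_of_mem h1]
      simpa using hε0.le
    · rw [Set.indicator_of_notMem (fun c => h1 (key.mp c)),
        Set.indicator_of_notMem h1]
      simpa using hε0.le
end

section
/- For any subgroup H of the unit circle U(1) with H ≠ {1}, there exists z ∈ H with |z − 1| ≥ √3. -/
open Real

lemma key_norm (z : ℂ) (hz : ‖z‖ = 1) (hre : z.re ≤ -(1/2)) :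
    Real.sqrt 3 ≤ ‖z - 1‖ := by
  have h0 : ‖z‖ ^ 2 = z.re ^ 2 + z.im ^ 2 := by
    rw [← Complex.normSq_eq_norm_sq, Complex.normSq_apply]; ring
  have h1 : ‖z - 1‖ ^ 2 = (z.re - 1) ^ 2 + z.im ^ 2 := by
    rw [← Complex.normSq_eq_norm_sq, Complex.normSq_apply]
    simp only [Complex.sub_re, Complex.sub_im, Complex.one_re, Complex.one_im, sub_zero]
    ring
  have h3 : (3 : ℝ) ≤ ‖z - 1‖ ^ 2 := by nlinarith [hz]
  calc Real.sqrt 3 ≤ Real.sqrt (‖z - 1‖ ^ 2) := Real.sqrt_le_sqrt h3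
    _ = ‖z - 1‖ := Real.sqrt_sq (norm_nonneg _)

lemma cos_le_neg_half (x : ℝ) (h1 : 2 * π / 3 ≤ x) (h2 : x ≤ 4 * π / 3) :
    Real.cos x ≤ -(1/2) := by
  have hpi := Real.pi_pos
  have habs : |x - π| ≤ π / 3 := by
    rw [abs_le]; constructor <;> linarith
  have hc : Real.cos (π/3) ≤ Real.cos |x - π| :=
    Real.cos_le_cos_of_nonneg_of_le_pi (abs_nonneg _) (by linarith) habs
  rw [Real.cos_abs, Real.cos_sub_pi, Real.cos_pi_div_three] at hc
  linarith

theorem stmt8 (H : Set ℂ) (hnorm : ∀ z ∈ H, ‖z‖ = 1) (hone : (1 : ℂ) ∈ H)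
    (hmul : ∀ z ∈ H, ∀ w ∈ H, z * w ∈ H) (hinv : ∀ z ∈ H, z⁻¹ ∈ H)
    (hne : H ≠ {1}) : ∃ z ∈ H, Real.sqrt 3 ≤ ‖z - 1‖ := by
  have hpi := Real.pi_pos
  -- powers stay in H
  have hpow : ∀ z ∈ H, ∀ n : ℕ, z ^ n ∈ H := by
    intro z hz n
    induction n with
    | zero => simpa using hone
    | succ k ih => rw [pow_succ]; exact hmul _ ih _ hz
  -- get a nontrivial element
  obtain ⟨x, hxH, hx1⟩ : ∃ x ∈ H, x ≠ 1 := by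
    by_contra h
    push_neg at h
    exact hne (Set.eq_singleton_iff_unique_mem.mpr ⟨hone, h⟩)
  have hxn : ‖x‖ = 1 := hnorm x hxH
  have hx0 : x ≠ 0 := by intro h; rw [h] at hxn; simp at hxn
  -- reduce to an element with argument in (0, π]
  obtain ⟨w, hwH, hwarg⟩ : ∃ w ∈ H, 0 < Complex.arg w ∧ Complex.arg w ≤ π := by
    rcases lt_trichotomy (Complex.arg x) 0 with h | h | h
    · refine ⟨x⁻¹, hinv x hxH, ?_⟩
      rw [Complex.arg_inv]
      have : Complex.arg x ≠ π := by intro hp; rw [hp] at h; linarith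
      rw [if_neg this]
      constructor
      · linarith
      · have := Complex.neg_pi_lt_arg x
        linarith
    · exfalso
      apply hx1
      have := Complex.norm_mul_exp_arg_mul_I x
      rw [h] at this
      simp only [Complex.ofReal_zero, zero_mul, Complex.exp_zero, mul_one] at this
      rw [← this]
      rw [hxn]
      simp
    · exact ⟨x, hxH, h, Complex.arg_le_pi x⟩
  set φ := Complex.arg w with hφ
  obtain ⟨hφ0, hφπ⟩ := hwarg
  have hwn : ‖w‖ = 1 := hnorm w hwH
  have hwexp : w = Complex.exp (φ * Complex.I) := by
    have := Complex.norm_mul_exp_arg_mul_I w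
    rw [hwn] at this
    simpa using this.symm
  -- real part of w^n is cos(n φ)
  have hre : ∀ n : ℕ, (w ^ n).re = Real.cos (n * φ) := by
    intro n
    rw [hwexp, ← Complex.exp_nat_mul]
    have : (n : ℂ) * ((φ : ℂ) * Complex.I) = ((n * φ : ℝ) : ℂ) * Complex.I := by
      push_cast; ring
    rw [this, Complex.exp_ofReal_mul_I_re]
  rcases le_or_gt (2 * π / 3) φ with hc | hc
  · refine ⟨w, hwH, key_norm w hwn ?_⟩
    have : w.re = Real.cos φ := by
      have := hre 1; simpa using this
    rw [this]
    exact cos_le_neg_half φ hc (by linarith)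
  · -- take n = ⌈(2π/3)/φ⌉
    set t : ℝ := (2 * π / 3) / φ with ht
    set n : ℕ := ⌈t⌉₊ with hn
    have ht0 : 0 < t := div_pos (by linarith) hφ0
    have h1 : 2 * π / 3 ≤ n * φ := by
      have := Nat.le_ceil t
      calc 2 * π / 3 = t * φ := (div_mul_cancel₀ _ hφ0.ne').symm
        _ ≤ n * φ := by nlinarith [Nat.le_ceil t]
    have h2 : (n : ℝ) * φ ≤ 4 * π / 3 := by
      have hlt : (n : ℝ) < t + 1 := Nat.ceil_lt_add_one ht0.le
      have : (n : ℝ) * φ < (t + 1) * φ := by nlinarith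
      have htφ : t * φ = 2 * π / 3 := div_mul_cancel₀ _ hφ0.ne'
      nlinarith
    refine ⟨w ^ n, hpow w hwH n, key_norm _ (hnorm _ (hpow w hwH n)) ?_⟩
    rw [hre n]
    exact cos_le_neg_half _ h1 h2
end

section
/- If Λ^ε is relatively dense in Ĝ for some ε > 0 and t ∈ G, then (t+Λ)^{3ε} is relatively dense in Ĝ. -/
open Pointwise

/-- The ε-dual set of a subset `Λ` of `G`, inside the Pontryagin dual of `G`. -/
def epsDual {G : Type*} [AddCommGroup G] [TopologicalSpace G] [IsTopologicalAddGroup G]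
    (Λ : Set G) (ε : ℝ) : Set (PontryaginDual (Multiplicative G)) :=
  {χ | ∀ x ∈ Λ, ‖(χ (Multiplicative.ofAdd x) : ℂ) - 1‖ ≤ ε}

private lemma norm_est {a a' b b' : ℂ} {ε : ℝ} (ha : ‖a‖ = 1) (ha' : ‖a'‖ = 1)
    (hb : ‖b‖ = 1) (hb' : ‖b'‖ = 1) (h1 : ‖a - a'‖ ≤ ε) (h2 : ‖b - b'‖ ≤ 2 * ε) :
    ‖a * a'⁻¹ * (b * b'⁻¹) - 1‖ ≤ 3 * ε := by
  have ha'0 : a' ≠ 0 := by intro h; rw [h] at ha'; simp at ha'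
  have hb'0 : b' ≠ 0 := by intro h; rw [h] at hb'; simp at hb'
  have key : a * a'⁻¹ * (b * b'⁻¹) - 1 = (a * b - a' * b') * (a'⁻¹ * b'⁻¹) := by
    field_simp
  rw [key, norm_mul, norm_mul, norm_inv, norm_inv, ha', hb']
  simp only [inv_one, mul_one]
  calc ‖a * b - a' * b'‖ ≤ ‖a * b - a' * b‖ + ‖a' * b - a' * b'‖ := by
        simpa using norm_sub_le_norm_sub_add_norm_sub (a * b) (a' * b) (a' * b')
    _ = ‖a - a'‖ * ‖b‖ + ‖a'‖ * ‖b - b'‖ := by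
        rw [← norm_mul, ← norm_mul, sub_mul, mul_sub]
    _ ≤ ε + 2 * ε := by rw [ha', hb]; simpa using add_le_add h1 h2
    _ = 3 * ε := by ring

theorem stmt13 {G : Type*} [AddCommGroup G] [TopologicalSpace G] [IsTopologicalAddGroup G]
    [LocallyCompactSpace G] (Λ : Set G) (ε : ℝ) (hε0 : 0 < ε) (t : G)
    (hrd : ∃ Q : Set (PontryaginDual (Multiplicative G)), IsCompact Q ∧
      epsDual Λ ε * Q = Set.univ) :
    ∃ Q : Set (PontryaginDual (Multiplicative G)), IsCompact Q ∧
      epsDual ((fun g => t + g) '' Λ) (3 * ε) * Q = Set.univ := by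
  classical
  obtain ⟨Q, hQc, hQu⟩ := hrd
  set D := epsDual Λ ε with hD
  set v : PontryaginDual (Multiplicative G) → Circle :=
    fun χ => χ (Multiplicative.ofAdd t) with hv
  -- cover the circle by finitely many balls of radius ε/2
  have hcov : (Set.univ : Set Circle) ⊆ ⋃ c : Circle, Metric.ball c (ε / 2) := by
    intro c _
    exact Set.mem_iUnion.2 ⟨c, Metric.mem_ball_self (by linarith)⟩
  obtain ⟨s, hs⟩ := isCompact_univ.elim_finite_subcover
    (fun c : Circle => Metric.ball c (ε / 2)) (fun c => Metric.isOpen_ball) hcov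
  -- for each center, choose a member of D mapping near it, if any
  set f : Circle → PontryaginDual (Multiplicative G) :=
    fun c => if h : ∃ d ∈ D, dist (v d) c < ε / 2 then h.choose else 1 with hf
  refine ⟨(f '' s) * Q, ((s.finite_toSet.image f).isCompact).mul hQc, ?_⟩
  apply Set.eq_univ_of_univ_subset
  intro χ _
  have hχ : χ ∈ D * Q := by rw [hQu]; trivial
  obtain ⟨d, hd, q, hq, rfl⟩ := hχ
  have : v d ∈ ⋃ c ∈ s, Metric.ball c (ε / 2) := hs (Set.mem_univ _)
  obtain ⟨c, hcs, hdc⟩ := Set.mem_iUnion₂.1 this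
  have hex : ∃ d' ∈ D, dist (v d') c < ε / 2 := ⟨d, hd, hdc⟩
  set d' := f c with hd'
  have hd'spec : d' ∈ D ∧ dist (v d') c < ε / 2 := by
    rw [hd', hf]; simp only [dif_pos hex]
    exact ⟨hex.choose_spec.1, hex.choose_spec.2⟩
  have hdd' : dist (v d) (v d') < ε := by
    calc dist (v d) (v d') ≤ dist (v d) c + dist c (v d') := dist_triangle _ _ _
      _ < ε / 2 + ε / 2 := add_lt_add hdc (dist_comm (v d') c ▸ hd'spec.2)
      _ = ε := by ring
  -- the key membership
  have hmem : d * d'⁻¹ ∈ epsDual ((fun g => t + g) '' Λ) (3 * ε) := by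
    rintro y ⟨x, hx, rfl⟩
    have heq : Multiplicative.ofAdd (t + x)
        = Multiplicative.ofAdd t * Multiplicative.ofAdd x := rfl
    have happ : ((d * d'⁻¹) (Multiplicative.ofAdd (t + x)) : ℂ)
        = (d (Multiplicative.ofAdd t) : ℂ) * (d' (Multiplicative.ofAdd t) : ℂ)⁻¹ *
          ((d (Multiplicative.ofAdd x) : ℂ) * (d' (Multiplicative.ofAdd x) : ℂ)⁻¹) := by
      have : (d * d'⁻¹) (Multiplicative.ofAdd (t + x))
          = d (Multiplicative.ofAdd t) * (d' (Multiplicative.ofAdd t))⁻¹ *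
            (d (Multiplicative.ofAdd x) * (d' (Multiplicative.ofAdd x))⁻¹) := by
        show d (Multiplicative.ofAdd (t + x)) * (d' (Multiplicative.ofAdd (t + x)))⁻¹ = _
        rw [heq, map_mul, map_mul, mul_inv]
        exact mul_mul_mul_comm _ _ _ _
      rw [this]; push_cast; ring
    rw [happ]
    have norm1 : ∀ (η : PontryaginDual (Multiplicative G)) (z : Multiplicative G),
        ‖(η z : ℂ)‖ = 1 := fun η z => by
      simpa using Circle.norm_coe (η z)
    have h1 : ‖(d (Multiplicative.ofAdd t) : ℂ) - (d' (Multiplicative.ofAdd t) : ℂ)‖ ≤ ε := by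
      have := hdd'.le
      rw [← dist_eq_norm]; exact this
    have h2 : ‖(d (Multiplicative.ofAdd x) : ℂ) - (d' (Multiplicative.ofAdd x) : ℂ)‖
        ≤ 2 * ε := by
      calc ‖(d (Multiplicative.ofAdd x) : ℂ) - (d' (Multiplicative.ofAdd x) : ℂ)‖
          ≤ ‖(d (Multiplicative.ofAdd x) : ℂ) - 1‖
            + ‖(1 : ℂ) - (d' (Multiplicative.ofAdd x) : ℂ)‖ := by
            simpa using norm_sub_le_norm_sub_add_norm_sub _ (1 : ℂ) _
        _ ≤ ε + ε := by
            refine add_le_add (hd x hx) ?_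
            rw [norm_sub_rev]; exact hd'spec.1 x hx
        _ = 2 * ε := by ring
    exact norm_est (norm1 d _) (norm1 d' _) (norm1 d _) (norm1 d' _) h1 h2
  -- now express χ = d * q as (d * d'⁻¹) * (d' * q)
  refine ⟨d * d'⁻¹, hmem, d' * q, ?_, by group⟩
  exact Set.mul_mem_mul ⟨c, hcs, rfl⟩ hq
end

section
/- Let f: G → ℂ be positive definite with f ≥ 0 pointwise on its values (f real nonnegative), f(0) > 0, and let 0 < a, b < f(0). If f(x) ≥ a and f(y) ≥ b, then f(x ± y) ≥ b − √(2 f(0)(f(0) − a)). -/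
theorem stmt19 {G : Type*} [AddCommGroup G] (f : G → ℝ)
    (hnonneg : ∀ x : G, 0 ≤ f x) (heven : ∀ x : G, f (-x) = f x)
    (hkrein : ∀ u v : G, |f (u + v) - f u| ^ 2 ≤ 2 * f 0 * (f 0 - f v))
    (h0 : 0 < f 0) (a b : ℝ) (ha0 : 0 < a) (ha : a < f 0) (hb0 : 0 < b) (hb : b < f 0)
    (x y : G) (hx : a ≤ f x) (hy : b ≤ f y) :
    b - Real.sqrt (2 * f 0 * (f 0 - a)) ≤ f (x + y) ∧
    b - Real.sqrt (2 * f 0 * (f 0 - a)) ≤ f (x - y) := by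
  have key : ∀ u : G, b ≤ f u →
      b - Real.sqrt (2 * f 0 * (f 0 - a)) ≤ f (u + x) := by
    intro u hu
    have h1 := hkrein u x
    have h2 : |f (u + x) - f u| ^ 2 ≤ 2 * f 0 * (f 0 - a) := by
      refine h1.trans ?_
      have : f 0 - f x ≤ f 0 - a := by linarith
      nlinarith
    have h3 : |f (u + x) - f u| ≤ Real.sqrt (2 * f 0 * (f 0 - a)) := by
      have := Real.sqrt_le_sqrt h2
      rwa [Real.sqrt_sq (abs_nonneg _)] at this
    have h4 := abs_le.mp h3
    linarith [h4.1]
  constructor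
  · have := key y hy
    rw [add_comm] at this
    exact this
  · have hy' : b ≤ f (-y) := by rw [heven]; exact hy
    have := key (-y) hy'
    rw [add_comm, ← sub_eq_add_neg] at this
    exact this
end
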